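/- Under the hypotheses of the generalized Chinese remainder theorem (positive integers m₁,…,mₙ and integers a₁,…,aₙ,r₁,…,rₙ satisfying the compatibility conditions), if x₀ is a solution of the system mᵢ ∣ (aᵢ·x − rᵢ) for all i, then x is also a solution if and only if lcm(m'₁, …, m'ₙ) ∣ (x − x₀), where m'ᵢ = mᵢ / gcd(aᵢ, mᵢ). -/

import Mathlib

lemma foldr_lcm_dvd (l : List ℤ) (d : ℤ) :
    (l.foldr (fun u v => (Int.lcm u v : ℤ)) 1) ∣ d ↔ ∀ u ∈ l, u ∣ d := by
  induction l with
  | nil => simp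
  | cons h t ih =>
    simp only [List.foldr_cons, List.mem_cons]
    constructor
    · intro hd
      have h1 : h ∣ d := dvd_trans (Int.dvd_lcm_left _ _) hd
      have h2 : (t.foldr (fun u v => (Int.lcm u v : ℤ)) 1) ∣ d :=
        dvd_trans (Int.dvd_lcm_right _ _) hd
      rintro u (rfl | hu)
      · exact h1
      · exact (ih.mp h2) u hu
    · intro hall
      exact Int.natCast_dvd.mpr (Int.lcm_dvd (Int.dvd_natAbs.mpr (hall h (Or.inl rfl))) (Int.dvd_natAbs.mpr (ih.mpr fun u hu => hall u (Or.inr hu))))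

lemma key_div (a mi y : ℤ) (hmi : 0 < mi) :
    mi / (Int.gcd a mi : ℤ) ∣ y ↔ mi ∣ a * y := by
  set g : ℤ := (Int.gcd a mi : ℤ) with hg
  have hgpos : 0 < Int.gcd a mi := Int.gcd_pos_of_ne_zero_right a hmi.ne'
  have hgz : (0:ℤ) < g := by rw [hg]; exact_mod_cast hgpos
  have hg0 : g ≠ 0 := hgz.ne'
  obtain ⟨m', hm'⟩ : g ∣ mi := Int.gcd_dvd_right _ _
  obtain ⟨a', ha'⟩ : g ∣ a := Int.gcd_dvd_left _ _
  have hmq : mi / g = m' := by rw [hm', Int.mul_ediv_cancel_left _ hg0]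
  have haq : a / g = a' := by rw [ha', Int.mul_ediv_cancel_left _ hg0]
  have hcop : Int.gcd (a / g) (mi / g) = 1 := Int.gcd_div_gcd_div_gcd hgpos
  rw [hmq, haq] at hcop
  rw [hmq]
  constructor
  · rintro ⟨k, rfl⟩
    exact ⟨a' * k, by rw [hm', ha']; ring⟩
  · intro hd
    rw [hm', ha'] at hd
    have : m' ∣ a' * y := by
      rcases hd with ⟨k, hk⟩
      refine ⟨k, ?_⟩
      have := hk
      have h2 : g * (a' * y) = g * (m' * k) := by linarith [hk]
      exact mul_left_cancel₀ hg0 h2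
    exact Int.dvd_of_dvd_mul_right_of_gcd_one this (Int.gcd_comm m' a' ▸ hcop)

theorem generalized_CRT_uniqueness (n : ℕ) (m a r : Fin n → ℤ) (hm : ∀ i, 0 < m i)
    (hcompat₁ : ∀ i j, (Int.gcd (a i * m j) (a j * m i) : ℤ) ∣ (a i * r j - a j * r i))
    (hcompat₂ : ∀ i, (Int.gcd (a i) (m i) : ℤ) ∣ r i)
    (x₀ : ℤ) (hx₀ : ∀ i, m i ∣ (a i * x₀ - r i))
    (L : ℤ)
    (hL : L = (List.ofFn fun i => m i / (Int.gcd (a i) (m i) : ℤ)).foldr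
      (fun u v => (Int.lcm u v : ℤ)) 1) :
    ∀ x : ℤ, (∀ i, m i ∣ (a i * x - r i)) ↔ L ∣ (x - x₀) := by
  intro x
  rw [hL, foldr_lcm_dvd]
  have step : ∀ i, (m i ∣ a i * x - r i) ↔ m i / (Int.gcd (a i) (m i) : ℤ) ∣ (x - x₀) := by
    intro i
    rw [key_div (a i) (m i) (x - x₀) (hm i)]
    constructor
    · intro h
      have := dvd_sub h (hx₀ i)
      simpa [mul_sub] using this
    · intro h
      have h2 : a i * x - r i = a i * (x - x₀) + (a i * x₀ - r i) := by ring
      rw [h2]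
      exact dvd_add h (hx₀ i)
  constructor
  · intro hall u hu
    simp only [List.mem_ofFn] at hu
    obtain ⟨i, rfl⟩ := hu
    exact (step i).mp (hall i)
  · intro hall i
    refine (step i).mpr (hall _ ?_)
    simp [List.mem_ofFn]
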